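/- For every finite simple graph G there exists a maximum 2-matching M of G such that the number of connected components of M having at most two vertices is at most the total number of 0-paths and 1-paths of every path cover of G. Consequently, G has a path cover whose total number of 0-paths and 1-paths is minimum over all path covers of G and which is obtained from a maximum 2-matching by deleting one edge from each cycle component. -/

import Mathlib

open SimpleGraph

/-- A 2-matching of `G`: a spanning subgraph (given as a graph `M ≤ G` on the same
vertex set) in which every vertex has degree at most 2. -/
def SimpleGraph.IsTwoMatching {V : Type*} (G M : SimpleGraph V) : Prop :=
  M ≤ G ∧ ∀ v : V, (M.neighborSet v).ncard ≤ 2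

/-- A maximum 2-matching of `G`: a 2-matching with the maximum number of edges. -/
def SimpleGraph.IsMaxTwoMatching {V : Type*} (G M : SimpleGraph V) : Prop :=
  G.IsTwoMatching M ∧
    ∀ M' : SimpleGraph V, G.IsTwoMatching M' → M'.edgeSet.ncard ≤ M.edgeSet.ncard

/-- A path cover of `G`, encoded as a spanning linear forest: a spanning subgraph
`P ≤ G` with maximum degree at most 2 and no cycles.  Its connected components are
exactly the vertex-disjoint paths covering all vertices of `G`. -/
def SimpleGraph.IsPathCover {V : Type*} (G P : SimpleGraph V) : Prop :=
  P ≤ G ∧ (∀ v : V, (P.neighborSet v).ncard ≤ 2) ∧ P.IsAcyclic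

/-- The size of a path cover: the number of paths, i.e. of connected components. -/
noncomputable def SimpleGraph.coverSize {V : Type*} (P : SimpleGraph V) : ℕ :=
  Nat.card P.ConnectedComponent

/-- The number of 0-paths (isolated vertices) of a path cover / 2-matching. -/
noncomputable def SimpleGraph.numZeroPaths {V : Type*} (P : SimpleGraph V) : ℕ :=
  {v : V | P.neighborSet v = ∅}.ncard

/-- The number of 1-paths (connected components consisting of a single edge,
i.e. having exactly two vertices) of a path cover. -/
noncomputable def SimpleGraph.numOnePaths {V : Type*} (P : SimpleGraph V) : ℕ :=
  {c : P.ConnectedComponent | c.supp.ncard = 2}.ncard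

/-- The number of connected components having at most two vertices. -/
noncomputable def SimpleGraph.numSmallComponents {V : Type*} (M : SimpleGraph V) : ℕ :=
  {c : M.ConnectedComponent | c.supp.ncard ≤ 2}.ncard

/-- The number of cycle components of a 2-matching: the components in which
every vertex has degree exactly 2. -/
noncomputable def SimpleGraph.numCycleComponents {V : Type*} (M : SimpleGraph V) : ℕ :=
  {c : M.ConnectedComponent | ∀ v ∈ c.supp, (M.neighborSet v).ncard = 2}.ncard

section Auxiliary

variable {V : Type*}

lemma walk_closed {H : SimpleGraph V} {S : Set V} (hS : ∀ z ∈ S, H.neighborSet z ⊆ S) :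
    ∀ {a b : V}, H.Walk a b → a ∈ S → b ∈ S := by
  intro a b w
  induction w with
  | nil => exact id
  | cons h p ih => exact fun ha => ih (hS _ ha h)

lemma supp_subset_of_closed {H : SimpleGraph V} {S : Set V}
    (hS : ∀ z ∈ S, H.neighborSet z ⊆ S) {v : V} (hv : v ∈ S) :
    (H.connectedComponentMk v).supp ⊆ S := by
  intro u hu
  rw [ConnectedComponent.mem_supp_iff, ConnectedComponent.eq] at hu
  obtain ⟨w⟩ := hu.symm
  exact walk_closed hS w hv

lemma neighborSet_subset_supp (H : SimpleGraph V) (v : V) :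
    H.neighborSet v ⊆ (H.connectedComponentMk v).supp := by
  intro w hw
  rw [ConnectedComponent.mem_supp_iff]
  exact ConnectedComponent.sound (hw.symm.reachable)

lemma supp_eq_singleton_of_isolated {H : SimpleGraph V} {v : V} (h : H.neighborSet v = ∅) :
    (H.connectedComponentMk v).supp = {v} := by
  apply Set.eq_singleton_iff_unique_mem.mpr
  refine ⟨ConnectedComponent.connectedComponentMk_mem, fun u hu => ?_⟩
  have : (H.connectedComponentMk v).supp ⊆ {v} :=
    supp_subset_of_closed (fun z hz => by rw [Set.mem_singleton_iff] at hz; subst hz; simp [h]) rfl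
  exact this hu

lemma isolated_of_supp_singleton {H : SimpleGraph V} {v : V}
    (h : (H.connectedComponentMk v).supp = {v}) : H.neighborSet v = ∅ := by
  ext w
  simp only [Set.mem_empty_iff_false, iff_false]
  intro hw
  have := neighborSet_subset_supp H v hw
  rw [h, Set.mem_singleton_iff] at this
  subst this
  exact H.irrefl hw

lemma closed_walk_mem_support_tail {H : SimpleGraph V} {u : V} (c : H.Walk u u)
    (hc : ¬ c.Nil) {x : V} : x ∈ c.support ↔ x ∈ c.support.tail := by
  cases c with
  | nil => simp at hc
  | cons h p =>
    simp only [Walk.support_cons, List.tail_cons, List.mem_cons]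
    constructor
    · rintro (rfl | hx)
      · exact p.end_mem_support
      · exact hx
    · exact fun hx => Or.inr hx

lemma cycle_start_two_neighbors {H : SimpleGraph V} {z : V} (W : H.Walk z z)
    (hW : W.IsCycle) :
    ∃ a b, a ≠ b ∧ a ∈ W.support ∧ b ∈ W.support ∧ H.Adj z a ∧ H.Adj z b := by
  cases W with
  | nil => exact absurd rfl hW.ne_nil
  | cons h p =>
    rename_i w
    have hnodup : s(z, w) ∉ p.edges := by
      have := hW.isTrail.edges_nodup
      rw [Walk.edges_cons, List.nodup_cons] at this
      exact this.1
    have hpne : z ≠ w := h.ne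
    rcases hrev : p.reverse with _ | ⟨h', q⟩
    · exact absurd rfl hpne
    · rename_i y
      have hadjy : H.Adj z y := h'
      have hymem : s(z, y) ∈ p.edges := by
        have : s(z, y) ∈ p.reverse.edges := by rw [hrev, Walk.edges_cons]; exact List.mem_cons_self
        rwa [Walk.edges_reverse, List.mem_reverse] at this
      have hyne : y ≠ w := by
        rintro rfl
        exact hnodup hymem
      refine ⟨y, w, hyne, ?_, ?_, hadjy, h⟩
      · have := Walk.snd_mem_support_of_mem_edges p hymem
        rw [Walk.support_cons]
        exact List.mem_cons_of_mem _ this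
      · rw [Walk.support_cons]
        exact List.mem_cons_of_mem _ p.start_mem_support

lemma cycle_two_neighbors {H : SimpleGraph V} {v z : V} (W : H.Walk v v)
    (hW : W.IsCycle) (hz : z ∈ W.support) :
    ∃ a b, a ≠ b ∧ a ∈ W.support ∧ b ∈ W.support ∧ H.Adj z a ∧ H.Adj z b := by
  classical
  have hW' : (W.rotate z hz).IsCycle := hW.rotate hz
  obtain ⟨a, b, hab, ha, hb, haa, hba⟩ := cycle_start_two_neighbors (W.rotate z hz) hW'
  have hrot := W.support_rotate z hz
  have hmem : ∀ x, x ∈ (W.rotate z hz).support → x ∈ W.support := by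
    intro x hx
    rw [closed_walk_mem_support_tail _ hW'.not_nil] at hx
    rw [closed_walk_mem_support_tail _ hW.not_nil]
    exact hrot.mem_iff.mp hx
  exact ⟨a, b, hab, hmem a ha, hmem b hb, haa, hba⟩

section FiniteAux
variable [Fintype V]

instance (H : SimpleGraph V) : Finite H.ConnectedComponent := Quot.finite _

lemma supp_ncard_pos (H : SimpleGraph V) (c : H.ConnectedComponent) : 1 ≤ c.supp.ncard := by
  obtain ⟨v, rfl⟩ := c.exists_rep
  have hv : v ∈ (H.connectedComponentMk v).supp := rfl
  have : ({v} : Set V) ⊆ (H.connectedComponentMk v).supp := by simpa using hv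
  calc 1 = ({v} : Set V).ncard := by simp
    _ ≤ _ := Set.ncard_le_ncard this (Set.toFinite _)

lemma zero_add_one_eq_small (P : SimpleGraph V) :
    P.numZeroPaths + P.numOnePaths = P.numSmallComponents := by
  classical
  have key : ∀ v : V, P.neighborSet v = ∅ ↔ (P.connectedComponentMk v).supp = {v} := by
    intro v
    constructor
    · exact supp_eq_singleton_of_isolated
    · intro h
      ext w
      simp only [Set.mem_empty_iff_false, iff_false]
      intro hw
      have := neighborSet_subset_supp P v hw
      rw [h, Set.mem_singleton_iff] at this
      subst this
      exact P.irrefl hw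
  have h0 : P.numZeroPaths = {c : P.ConnectedComponent | c.supp.ncard = 1}.ncard := by
    rw [SimpleGraph.numZeroPaths]
    have himg : P.connectedComponentMk '' {v : V | P.neighborSet v = ∅}
        = {c : P.ConnectedComponent | c.supp.ncard = 1} := by
      ext c
      simp only [Set.mem_image, Set.mem_setOf_eq]
      constructor
      · rintro ⟨v, hv, rfl⟩
        rw [(key v).mp hv]
        simp
      · intro hc
        obtain ⟨x, hx⟩ := Set.ncard_eq_one.mp hc
        have hxc : P.connectedComponentMk x = c := by
          have : x ∈ c.supp := by rw [hx]; rfl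
          rwa [ConnectedComponent.mem_supp_iff] at this
        refine ⟨x, ?_, hxc⟩
        show P.neighborSet x = ∅
        rw [key x, hxc]
        exact hx
    have hinj : Set.InjOn P.connectedComponentMk {v : V | P.neighborSet v = ∅} := by
      intro v hv v' hv' heq
      have h1 := (key v).mp hv
      have h2 := (key v').mp hv'
      rw [heq, h2] at h1
      exact (Set.singleton_eq_singleton_iff.mp h1).symm
    rw [← himg, Set.ncard_image_of_injOn hinj]
  have hsplit : {c : P.ConnectedComponent | c.supp.ncard ≤ 2}
      = {c : P.ConnectedComponent | c.supp.ncard = 1} ∪ {c | c.supp.ncard = 2} := by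
    ext c
    have := supp_ncard_pos P c
    simp only [Set.mem_setOf_eq, Set.mem_union]
    omega
  have hdisj : Disjoint {c : P.ConnectedComponent | c.supp.ncard = 1} {c | c.supp.ncard = 2} := by
    rw [Set.disjoint_left]
    intro c h1 h2
    simp only [Set.mem_setOf_eq] at h1 h2
    omega
  rw [SimpleGraph.numSmallComponents, hsplit, Set.ncard_union_eq hdisj (Set.toFinite _)
    (Set.toFinite _), h0, SimpleGraph.numOnePaths]

lemma swap_lemma {G M P : SimpleGraph V}
    (hM : G.IsMaxTwoMatching M) (hP : P ≤ G) (hPdeg : ∀ v, (P.neighborSet v).ncard ≤ 2)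
    (hopt : ∀ M' : SimpleGraph V, G.IsMaxTwoMatching M' →
      (M'.edgeSet ∩ P.edgeSet).ncard ≤ (M.edgeSet ∩ P.edgeSet).ncard)
    {u w : V} (hdegu : (M.neighborSet u).ncard ≤ 1) (hadj : P.Adj u w)
    (hnadj : ¬ M.Adj u w) : False := by
  classical
  have huw : G.Adj u w := hP hadj
  have hne : u ≠ w := hadj.ne
  have hEle : fromEdgeSet {s(u, w)} ≤ G := by
    intro a b hab
    rw [fromEdgeSet_adj, Set.mem_singleton_iff, Sym2.eq_iff] at hab
    rcases hab.1 with ⟨rfl, rfl⟩ | ⟨rfl, rfl⟩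
    · exact huw
    · exact huw.symm
  have hEnbr : ∀ v : V, (fromEdgeSet {s(u, w)}).neighborSet v ⊆ {u, w} := by
    intro v y hy
    rw [mem_neighborSet, fromEdgeSet_adj, Set.mem_singleton_iff, Sym2.eq_iff] at hy
    rcases hy.1 with ⟨rfl, rfl⟩ | ⟨rfl, rfl⟩
    · exact Or.inr rfl
    · exact Or.inl rfl
  have hEnbru : (fromEdgeSet {s(u, w)}).neighborSet u = {w} := by
    ext y
    rw [mem_neighborSet, fromEdgeSet_adj, Set.mem_singleton_iff, Sym2.eq_iff,
      Set.mem_singleton_iff]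
    constructor
    · rintro ⟨h1 | h1, hne'⟩
      · exact h1.2
      · exact absurd h1.1 hne
    · rintro rfl
      exact ⟨Or.inl ⟨rfl, rfl⟩, hne⟩
  have hEnbrw : (fromEdgeSet {s(u, w)}).neighborSet w = {u} := by
    ext y
    rw [mem_neighborSet, fromEdgeSet_adj, Set.mem_singleton_iff, Sym2.eq_iff,
      Set.mem_singleton_iff]
    constructor
    · rintro ⟨h1 | h1, hne'⟩
      · exact absurd h1.1.symm hne
      · exact h1.2
    · rintro rfl
      exact ⟨Or.inr ⟨rfl, rfl⟩, hne.symm⟩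
  have hEnbro : ∀ v : V, v ≠ u → v ≠ w → (fromEdgeSet {s(u, w)}).neighborSet v = ∅ := by
    intro v hvu hvw
    ext y
    simp only [mem_neighborSet, fromEdgeSet_adj, Set.mem_singleton_iff, Sym2.eq_iff,
      Set.mem_empty_iff_false, iff_false]
    rintro ⟨⟨rfl, rfl⟩ | ⟨rfl, rfl⟩, _⟩
    · exact hvu rfl
    · exact hvw rfl
  have hnbr_sup : ∀ (A B : SimpleGraph V) (v : V),
      (A ⊔ B).neighborSet v = A.neighborSet v ∪ B.neighborSet v := by
    intro A B v; ext y; simp [mem_neighborSet, sup_adj]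
  have huwE : s(u, w) ∉ M.edgeSet := by rwa [mem_edgeSet]
  have huwP : s(u, w) ∈ P.edgeSet := hadj
  by_cases hw : (M.neighborSet w).ncard ≤ 1
  · -- augment: M ⊔ edge has more edges
    set M' := M ⊔ fromEdgeSet {s(u, w)} with hM'
    have htm : G.IsTwoMatching M' := by
      refine ⟨sup_le hM.1.1 hEle, fun v => ?_⟩
      rw [hnbr_sup]
      by_cases hvu : v = u
      · subst hvu
        rw [hEnbru]
        calc (M.neighborSet v ∪ {w}).ncard ≤ _ := Set.ncard_union_le _ _
          _ ≤ 2 := by rw [Set.ncard_singleton]; omega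
      by_cases hvw : v = w
      · subst hvw
        rw [hEnbrw]
        calc (M.neighborSet v ∪ {u}).ncard ≤ _ := Set.ncard_union_le _ _
          _ ≤ 2 := by rw [Set.ncard_singleton]; omega
      · rw [hEnbro v hvu hvw, Set.union_empty]
        exact hM.1.2 v
    have hedge : M'.edgeSet = insert s(u, w) M.edgeSet := by
      have hdiag : ({s(u, w)} : Set (Sym2 V)) \ Sym2.diagSet = {s(u, w)} := by
        ext e
        simp only [Set.mem_diff, Set.mem_singleton_iff, Set.mem_setOf_eq,
          and_iff_left_iff_imp]
        rintro rfl
        exact fun hd => hne (Sym2.mk_isDiag_iff.mp hd)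
      rw [hM', edgeSet_sup, edgeSet_fromEdgeSet, hdiag, Set.union_singleton]
    have := hM.2 M' htm
    rw [hedge, Set.ncard_insert_of_notMem huwE (Set.toFinite _)] at this
    omega
  · push_neg at hw
    have hw2 : (M.neighborSet w).ncard = 2 := le_antisymm (hM.1.2 w) hw
    have hunm : u ∉ M.neighborSet w := fun h => hnadj (h.symm)
    have hupw : u ∈ P.neighborSet w := hadj.symm
    obtain ⟨x, hxM, hxP⟩ : ∃ x, x ∈ M.neighborSet w ∧ x ∉ P.neighborSet w := by
      by_contra hc
      push_neg at hc
      have hsub : insert u (M.neighborSet w) ⊆ P.neighborSet w := by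
        intro y hy
        rcases Set.mem_insert_iff.mp hy with rfl | hy
        · exact hupw
        · exact hc y hy
      have := Set.ncard_le_ncard hsub (Set.toFinite _)
      rw [Set.ncard_insert_of_notMem hunm (Set.toFinite _), hw2] at this
      have := hPdeg w
      omega
    have hxu : x ≠ u := fun h => hunm (h ▸ hxM)
    have hMwx : M.Adj w x := hxM
    have hxw : x ≠ w := fun h => M.irrefl (h ▸ hMwx)
    -- deleted-neighbor computations
    have hdel_nbr : ∀ v : V, (M.deleteEdges {s(w, x)}).neighborSet v
        = M.neighborSet v \ {y | s(v, y) ∈ ({s(w, x)} : Set (Sym2 V))} := by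
      intro v; ext y
      simp only [mem_neighborSet, deleteEdges_adj, Set.mem_diff, Set.mem_setOf_eq,
        Set.mem_singleton_iff]
    have hdelw : (M.deleteEdges {s(w, x)}).neighborSet w = M.neighborSet w \ {x} := by
      rw [hdel_nbr]
      congr 1
      ext y
      constructor
      · intro hy
        simp only [Set.mem_setOf_eq, Set.mem_singleton_iff] at hy
        rw [Sym2.eq_iff] at hy
        rcases hy with h1 | h1
        · exact h1.2
        · exact absurd h1.1.symm hxw
      · intro hy
        rw [Set.mem_singleton_iff] at hy
        subst hy
        exact rfl
    have hdel_sub : ∀ v : V, (M.deleteEdges {s(w, x)}).neighborSet v ⊆ M.neighborSet v := by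
      intro v y hy
      rw [hdel_nbr] at hy
      exact hy.1
    set M' := M.deleteEdges {s(w, x)} ⊔ fromEdgeSet {s(u, w)} with hM'
    have htm : G.IsTwoMatching M' := by
      refine ⟨sup_le ((deleteEdges_le _).trans hM.1.1) hEle, fun v => ?_⟩
      rw [hnbr_sup]
      by_cases hvu : v = u
      · subst hvu
        rw [hEnbru]
        calc _ ≤ _ := Set.ncard_union_le _ _
          _ ≤ 2 := by
            have := Set.ncard_le_ncard (hdel_sub v) (Set.toFinite _)
            rw [Set.ncard_singleton]; omega
      by_cases hvw : v = w
      · subst hvw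
        rw [hEnbrw, hdelw]
        calc _ ≤ _ := Set.ncard_union_le _ _
          _ ≤ 2 := by
            have hxmem : x ∈ M.neighborSet v := hxM
            have : (M.neighborSet v \ {x}).ncard = (M.neighborSet v).ncard - 1 := by
              rw [← Set.ncard_diff_singleton_add_one hxmem (Set.toFinite _)]
              omega
            rw [Set.ncard_singleton, this, hw2]
      · rw [hEnbro v hvu hvw, Set.union_empty]
        exact (Set.ncard_le_ncard (hdel_sub v) (Set.toFinite _)).trans (hM.1.2 v)
    have hwxE : s(w, x) ∈ M.edgeSet := hMwx
    have hwxP : s(w, x) ∉ P.edgeSet := hxP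
    have hne_edges : s(u, w) ≠ s(w, x) := by
      intro h
      rw [Sym2.eq_iff] at h
      rcases h with ⟨h1, h2⟩ | ⟨h1, h2⟩
      · exact hne h1
      · exact hxu h1.symm
    have hedge : M'.edgeSet = insert s(u, w) (M.edgeSet \ {s(w, x)}) := by
      have hdiag : ({s(u, w)} : Set (Sym2 V)) \ Sym2.diagSet = {s(u, w)} := by
        ext e
        simp only [Set.mem_diff, Set.mem_singleton_iff, Set.mem_setOf_eq,
          and_iff_left_iff_imp]
        rintro rfl
        exact fun hd => hne (Sym2.mk_isDiag_iff.mp hd)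
      rw [hM', edgeSet_sup, edgeSet_deleteEdges, edgeSet_fromEdgeSet, hdiag, Set.union_singleton]
    have hcard : M'.edgeSet.ncard = M.edgeSet.ncard := by
      rw [hedge, Set.ncard_insert_of_notMem (by simp [huwE]) (Set.toFinite _),
        ← Set.ncard_diff_singleton_add_one hwxE (Set.toFinite _)]
    have hmax' : G.IsMaxTwoMatching M' := ⟨htm, fun M'' h'' => (hM.2 M'' h'').trans_eq hcard.symm⟩
    have hinter : M'.edgeSet ∩ P.edgeSet = insert s(u, w) (M.edgeSet ∩ P.edgeSet) := by
      rw [hedge]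
      ext e
      simp only [Set.mem_inter_iff, Set.mem_insert_iff, Set.mem_diff, Set.mem_singleton_iff]
      constructor
      · rintro ⟨rfl | ⟨heM, hewx⟩, heP⟩
        · exact Or.inl rfl
        · exact Or.inr ⟨heM, heP⟩
      · rintro (rfl | ⟨heM, heP⟩)
        · exact ⟨Or.inl rfl, huwP⟩
        · refine ⟨Or.inr ⟨heM, ?_⟩, heP⟩
          rintro rfl
          exact hwxP heP
    have := hopt M' hmax'
    rw [hinter, Set.ncard_insert_of_notMem (fun hmem => huwE hmem.1) (Set.toFinite _)] at this
    omega

lemma part1core {G M P : SimpleGraph V}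
    (hM : G.IsMaxTwoMatching M) (hP : G.IsPathCover P)
    (hopt : ∀ M' : SimpleGraph V, G.IsMaxTwoMatching M' →
      (M'.edgeSet ∩ P.edgeSet).ncard ≤ (M.edgeSet ∩ P.edgeSet).ncard) :
    M.numSmallComponents ≤ P.numSmallComponents := by
  classical
  set f : M.ConnectedComponent → P.ConnectedComponent :=
    fun c => P.connectedComponentMk (Quot.out c) with hf
  have hout : ∀ c : M.ConnectedComponent, (Quot.out c) ∈ c.supp := by
    intro c
    rw [ConnectedComponent.mem_supp_iff]
    exact Quot.out_eq c
  have key : ∀ c : M.ConnectedComponent, c.supp.ncard ≤ 2 →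
      (f c).supp ⊆ c.supp ∧ (f c).supp.ncard ≤ 2 := by
    intro c hc
    have hvc : M.connectedComponentMk (Quot.out c) = c :=
      (ConnectedComponent.mem_supp_iff _ _).mp (hout c)
    have h1 := supp_ncard_pos M c
    set v := Quot.out c
    interval_cases h2 : c.supp.ncard
    · -- ncard = 1
      obtain ⟨x, hx⟩ := Set.ncard_eq_one.mp h2
      have hxv : x = v := by
        have := hout c
        rw [hx, Set.mem_singleton_iff] at this
        exact this.symm
      subst hxv
      have hiso : M.neighborSet v = ∅ := isolated_of_supp_singleton (by rw [hvc]; exact hx)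
      have hPiso : P.neighborSet v = ∅ := by
        ext w
        simp only [Set.mem_empty_iff_false, iff_false]
        intro hw
        exact swap_lemma hM hP.1 hP.2.1 hopt (by rw [hiso]; simp) hw
          (fun hadj' => by rw [Set.eq_empty_iff_forall_notMem] at hiso; exact hiso w hadj')
      constructor
      · rw [hf]
        simp only
        rw [supp_eq_singleton_of_isolated hPiso, hx]
      · rw [hf]
        simp only
        rw [supp_eq_singleton_of_isolated hPiso]
        simp
    · -- ncard = 2
      obtain ⟨a, b, hab, hsupp⟩ := Set.ncard_eq_two.mp h2
      obtain ⟨t, htv, hvt⟩ : ∃ t, t ≠ v ∧ c.supp = {v, t} := by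
        have hv := hout c
        rw [hsupp, Set.mem_insert_iff, Set.mem_singleton_iff] at hv
        rcases hv with rfl | rfl
        · exact ⟨b, fun h => hab h.symm, hsupp⟩
        · exact ⟨a, hab, by rw [hsupp, Set.pair_comm]⟩
      have htc : M.connectedComponentMk t = c := by
        have : t ∈ c.supp := by rw [hvt]; exact Or.inr rfl
        rwa [ConnectedComponent.mem_supp_iff] at this
      have hMv : M.neighborSet v ⊆ {t} := by
        intro y hy
        have hy2 : y ∈ c.supp := by rw [← hvc]; exact neighborSet_subset_supp M v hy
        rw [hvt, Set.mem_insert_iff, Set.mem_singleton_iff] at hy2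
        rcases hy2 with rfl | rfl
        · exact absurd hy (M.irrefl)
        · rfl
      have hMt : M.neighborSet t ⊆ {v} := by
        intro y hy
        have hy2 : y ∈ c.supp := by rw [← htc]; exact neighborSet_subset_supp M t hy
        rw [hvt, Set.mem_insert_iff, Set.mem_singleton_iff] at hy2
        rcases hy2 with rfl | rfl
        · rfl
        · exact absurd hy (M.irrefl)
      have hdegv : (M.neighborSet v).ncard ≤ 1 := by
        have := Set.ncard_le_ncard hMv (Set.toFinite _)
        simpa using this
      have hdegt : (M.neighborSet t).ncard ≤ 1 := by
        have := Set.ncard_le_ncard hMt (Set.toFinite _)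
        simpa using this
      have hPv : P.neighborSet v ⊆ {t} := by
        intro y hy
        by_contra hyt
        rw [Set.mem_singleton_iff] at hyt
        exact swap_lemma hM hP.1 hP.2.1 hopt hdegv hy
          (fun hadj' => hyt (hMv hadj'))
      have hPt : P.neighborSet t ⊆ {v} := by
        intro y hy
        by_contra hyv
        rw [Set.mem_singleton_iff] at hyv
        exact swap_lemma hM hP.1 hP.2.1 hopt hdegt hy
          (fun hadj' => hyv (hMt hadj'))
      have hclosed : ∀ z ∈ ({v, t} : Set V), P.neighborSet z ⊆ {v, t} := by
        intro z hz
        rcases hz with rfl | hz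
        · exact hPv.trans (by intro y hy; exact Or.inr hy)
        · rw [Set.mem_singleton_iff] at hz
          subst hz
          exact hPt.trans (by intro y hy; exact Or.inl hy)
      have hsub : (f c).supp ⊆ {v, t} :=
        supp_subset_of_closed hclosed (Or.inl rfl)
      constructor
      · rw [hvt]; exact hsub
      · calc (f c).supp.ncard ≤ ({v, t} : Set V).ncard :=
            Set.ncard_le_ncard hsub (Set.toFinite _)
          _ = 2 := Set.ncard_pair (Ne.symm htv)
  have hmaps : ∀ c ∈ {c : M.ConnectedComponent | c.supp.ncard ≤ 2},
      f c ∈ {c : P.ConnectedComponent | c.supp.ncard ≤ 2} := fun c hc => (key c hc).2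
  have hinj : Set.InjOn f {c : M.ConnectedComponent | c.supp.ncard ≤ 2} := by
    intro c hc c' hc' heq
    have h1 : (f c').supp ⊆ c'.supp := (key c' hc').1
    have h2 : (f c).supp ⊆ c.supp := (key c hc).1
    have hm : Quot.out c' ∈ (f c').supp := by
      rw [hf]; exact ConnectedComponent.connectedComponentMk_mem
    have hmc : Quot.out c' ∈ c.supp := h2 (heq ▸ hm)
    have hmc' : Quot.out c' ∈ c'.supp := hout c'
    rw [ConnectedComponent.mem_supp_iff] at hmc hmc'
    exact hmc.symm.trans hmc'
  exact Set.ncard_le_ncard_of_injOn f hmaps hinj (Set.toFinite _)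

lemma even_sum_ncard_neighbors (H : SimpleGraph V) (c : H.ConnectedComponent) :
    Even (∑ z ∈ (Set.toFinite c.supp).toFinset, (H.neighborSet z).ncard) := by
  classical
  rw [Set.Finite.toFinset_eq_toFinset]
  set A : Set V := c.supp with hA
  have hclosed : ∀ z ∈ A, H.neighborSet z ⊆ A := by
    intro z hz y hy
    rw [hA, ConnectedComponent.mem_supp_iff] at hz ⊢
    rw [← hz]
    exact ConnectedComponent.sound hy.symm.reachable
  set H' : SimpleGraph A := H.induce A with hH'
  have hdeg : ∀ (z : V) (hz : z ∈ A),
      (H'.neighborSet ⟨z, hz⟩).ncard = (H.neighborSet z).ncard := by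
    intro z hz
    have himg : Subtype.val '' (H'.neighborSet ⟨z, hz⟩) = H.neighborSet z := by
      ext y
      simp only [Set.mem_image, mem_neighborSet]
      constructor
      · rintro ⟨⟨y', hy'⟩, hadj, rfl⟩
        exact hadj
      · intro hadj
        exact ⟨⟨y, hclosed z hz hadj⟩, hadj, rfl⟩
    rw [← himg, Set.ncard_image_of_injective _ Subtype.val_injective]
  have hhs := SimpleGraph.sum_degrees_eq_twice_card_edges H'
  have heven : Even (∑ v : A, H'.degree v) := ⟨_, by rw [hhs]; ring⟩
  have hdeg2 : ∀ v : A, H'.degree v = (H'.neighborSet v).ncard := by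
    intro v
    rw [← SimpleGraph.card_neighborSet_eq_degree, Set.ncard_eq_toFinset_card']
    simp
  have : (∑ v : A, H'.degree v) = ∑ z ∈ c.supp.toFinset, (H.neighborSet z).ncard := by
    rw [← Finset.sum_set_coe (f := fun z => (H.neighborSet z).ncard) (s := A)]
    apply Finset.sum_congr rfl
    intro v _
    rw [hdeg2 v, hdeg v.1 v.2]
  rwa [this] at heven

lemma part2 (M : SimpleGraph V) (hdeg : ∀ v, (M.neighborSet v).ncard ≤ 2) :
    ∃ P₀ : SimpleGraph V, P₀ ≤ M ∧ (∀ v, (P₀.neighborSet v).ncard ≤ 2) ∧ P₀.IsAcyclic ∧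
      P₀.numSmallComponents ≤ M.numSmallComponents ∧
      P₀.edgeSet.ncard = M.edgeSet.ncard - M.numCycleComponents := by
  classical
  set C := {c : M.ConnectedComponent | ∀ v ∈ c.supp, (M.neighborSet v).ncard = 2} with hC
  set vc : M.ConnectedComponent → V := fun c => Quot.out c with hvc_def
  have hvc : ∀ c : M.ConnectedComponent, vc c ∈ c.supp := by
    intro c
    rw [ConnectedComponent.mem_supp_iff]
    exact Quot.out_eq c
  set xc : M.ConnectedComponent → V := fun c =>
    if h : (M.neighborSet (vc c)).Nonempty then h.choose else vc c with hxc_def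
  have hxc : ∀ c ∈ C, xc c ∈ M.neighborSet (vc c) := by
    intro c hc
    have hne : (M.neighborSet (vc c)).Nonempty := by
      apply Set.nonempty_of_ncard_ne_zero
      rw [hc (vc c) (hvc c)]
      omega
    rw [hxc_def]
    simp only [dif_pos hne]
    exact hne.choose_spec
  have hadjc : ∀ c ∈ C, M.Adj (vc c) (xc c) := fun c hc => hxc c hc
  have hnec : ∀ c ∈ C, vc c ≠ xc c := fun c hc => (hadjc c hc).ne
  have hxc_supp : ∀ c ∈ C, xc c ∈ c.supp := by
    intro c hc
    have h1 := neighborSet_subset_supp M (vc c) (hxc c hc)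
    have h2 : M.connectedComponentMk (vc c) = c :=
      (ConnectedComponent.mem_supp_iff _ _).mp (hvc c)
    rwa [h2] at h1
  set D : Set (Sym2 V) := (fun c => s(vc c, xc c)) '' C with hD_def
  set P₀ := M.deleteEdges D with hP₀
  -- membership characterization of D
  have del_spec : ∀ z y : V, s(z, y) ∈ D ↔
      ∃ c ∈ C, (z = vc c ∧ y = xc c) ∨ (z = xc c ∧ y = vc c) := by
    intro z y
    rw [hD_def]
    simp only [Set.mem_image]
    constructor
    · rintro ⟨c, hc, he⟩
      rw [Sym2.eq_iff] at he
      rcases he with ⟨h1, h2⟩ | ⟨h1, h2⟩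
      · exact ⟨c, hc, Or.inl ⟨h1.symm, h2.symm⟩⟩
      · exact ⟨c, hc, Or.inr ⟨h2.symm, h1.symm⟩⟩
    · rintro ⟨c, hc, ⟨rfl, rfl⟩ | ⟨rfl, rfl⟩⟩
      · exact ⟨c, hc, rfl⟩
      · exact ⟨c, hc, Sym2.eq_swap⟩
  have comp_of_endpoint : ∀ c ∈ C, ∀ z : V, (z = vc c ∨ z = xc c) →
      M.connectedComponentMk z = c := by
    rintro c hc z (rfl | rfl)
    · exact (ConnectedComponent.mem_supp_iff _ _).mp (hvc c)
    · exact (ConnectedComponent.mem_supp_iff _ _).mp (hxc_supp c hc)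
  have nbr0 : ∀ z : V, P₀.neighborSet z = M.neighborSet z \ {y | s(z, y) ∈ D} := by
    intro z
    ext y
    simp only [hP₀, mem_neighborSet, deleteEdges_adj, Set.mem_diff, Set.mem_setOf_eq]
  -- neighbor set at vc c
  have nbr_vc : ∀ c ∈ C, P₀.neighborSet (vc c) = M.neighborSet (vc c) \ {xc c} := by
    intro c hc
    rw [nbr0]
    congr 1
    ext y
    simp only [Set.mem_setOf_eq, Set.mem_singleton_iff]
    constructor
    · intro hy
      obtain ⟨c', hc', hcase⟩ := (del_spec _ _).mp hy
      rcases hcase with ⟨h1, h2⟩ | ⟨h1, h2⟩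
      · have hcc : c' = c := by
          rw [← comp_of_endpoint c' hc' (vc c) (Or.inl h1),
            comp_of_endpoint c hc (vc c) (Or.inl rfl)]
        rw [hcc] at h2
        exact h2
      · have hcc : c' = c := by
          rw [← comp_of_endpoint c' hc' (vc c) (Or.inr h1),
            comp_of_endpoint c hc (vc c) (Or.inl rfl)]
        rw [hcc] at h1
        exact absurd h1 (hnec c hc)
    · rintro rfl
      exact (del_spec _ _).mpr ⟨c, hc, Or.inl ⟨rfl, rfl⟩⟩
  have ncard_nbr_vc : ∀ c ∈ C, (P₀.neighborSet (vc c)).ncard = 1 := by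
    intro c hc
    rw [nbr_vc c hc]
    have h2 := hc (vc c) (hvc c)
    have := Set.ncard_diff_singleton_add_one (hxc c hc) (Set.toFinite _)
    omega
  -- vertices not endpoints of deleted edges
  have nbr_other : ∀ z : V, (∀ c ∈ C, z ≠ vc c ∧ z ≠ xc c) →
      P₀.neighborSet z = M.neighborSet z := by
    intro z hz
    rw [nbr0]
    have hempty : {y | s(z, y) ∈ D} = ∅ := by
      ext y
      simp only [Set.mem_setOf_eq, Set.mem_empty_iff_false, iff_false]
      intro hy
      obtain ⟨c', hc', hcase⟩ := (del_spec _ _).mp hy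
      rcases hcase with ⟨h1, _⟩ | ⟨h1, _⟩
      · exact (hz c' hc').1 h1
      · exact (hz c' hc').2 h1
    rw [hempty, Set.diff_empty]
  -- vertices in the support of a cycle component that are not the chosen endpoints
  have nbr_other' : ∀ (c : M.ConnectedComponent), c ∈ C → ∀ z ∈ c.supp,
      z ≠ vc c → z ≠ xc c → P₀.neighborSet z = M.neighborSet z := by
    intro c hc z hz hzv hzx
    apply nbr_other
    intro c' hc'
    have hzc : M.connectedComponentMk z = c := (ConnectedComponent.mem_supp_iff _ _).mp hz
    constructor
    · intro hzeq
      have h1 := comp_of_endpoint c' hc' z (Or.inl hzeq)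
      rw [hzc] at h1
      rw [← h1] at hzeq
      exact hzv hzeq
    · intro hzeq
      have h1 := comp_of_endpoint c' hc' z (Or.inr hzeq)
      rw [hzc] at h1
      rw [← h1] at hzeq
      exact hzx hzeq
  have hP₀le : P₀ ≤ M := deleteEdges_le D
  -- deleting the chosen edge of a cycle component does not disconnect it
  have reach : ∀ c ∈ C, P₀.Reachable (vc c) (xc c) := by
    intro c hc
    by_contra h
    set A : Set V := (P₀.connectedComponentMk (vc c)).supp with hA
    have hAc : A ⊆ c.supp := by
      rw [hA]
      exact ConnectedComponent.connectedComponentMk_supp_subset_supp hP₀le c (hvc c)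
    have hvA : vc c ∈ A := ConnectedComponent.connectedComponentMk_mem
    have hxA : xc c ∉ A := by
      intro hx
      rw [hA, ConnectedComponent.mem_supp_iff, ConnectedComponent.eq] at hx
      exact h hx.symm
    have heven := even_sum_ncard_neighbors P₀ (P₀.connectedComponentMk (vc c))
    set T := (Set.toFinite (P₀.connectedComponentMk (vc c)).supp).toFinset with hT
    have hvT : vc c ∈ T := by rw [hT, Set.Finite.mem_toFinset]; exact hvA
    have hsum2 : ∀ z ∈ T.erase (vc c), (P₀.neighborSet z).ncard = 2 := by
      intro z hz
      rw [Finset.mem_erase] at hz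
      obtain ⟨hzv, hzT⟩ := hz
      rw [hT, Set.Finite.mem_toFinset] at hzT
      have hzc : z ∈ c.supp := hAc hzT
      have hzx : z ≠ xc c := by rintro rfl; exact hxA hzT
      rw [nbr_other' c hc z hzc hzv hzx]
      exact hc z hzc
    have hsplit := Finset.sum_erase_add T (fun z => (P₀.neighborSet z).ncard) hvT
    have herase : ∑ z ∈ T.erase (vc c), (P₀.neighborSet z).ncard
        = 2 * (T.erase (vc c)).card := by
      rw [Finset.sum_congr rfl hsum2, Finset.sum_const, smul_eq_mul, mul_comm]
    rw [← hsplit, herase] at heven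
    beta_reduce at heven
    rw [ncard_nbr_vc c hc] at heven
    obtain ⟨m, hm⟩ := heven
    omega
  -- reachability in M implies reachability in P₀
  have reach_adj : ∀ a b : V, M.Adj a b → P₀.Reachable a b := by
    intro a b hab
    by_cases hD : s(a, b) ∈ D
    · obtain ⟨c, hc, hcase⟩ := (del_spec _ _).mp hD
      rcases hcase with ⟨rfl, rfl⟩ | ⟨rfl, rfl⟩
      · exact reach c hc
      · exact (reach c hc).symm
    · exact (deleteEdges_adj.mpr ⟨hab, hD⟩).reachable
  have reach_all : ∀ a b : V, M.Reachable a b → P₀.Reachable a b := by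
    intro a b hab
    obtain ⟨w⟩ := hab
    induction w with
    | nil => exact Reachable.refl _
    | cons h p ih => exact (reach_adj _ _ h).trans ih
  have supp_eq : ∀ v : V, (P₀.connectedComponentMk v).supp
      = (M.connectedComponentMk v).supp := by
    intro v
    ext u
    rw [ConnectedComponent.mem_supp_iff, ConnectedComponent.mem_supp_iff,
      ConnectedComponent.eq, ConnectedComponent.eq]
    exact ⟨fun hr => hr.mono hP₀le, fun hr => reach_all u v hr⟩
  -- acyclicity
  have hacyclic : P₀.IsAcyclic := by
    intro v W hW
    -- every vertex on W has exactly two P₀-neighbours, all inside the support of W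
    set S : Set V := {x | x ∈ W.support} with hS
    have hstep : ∀ z ∈ S, (P₀.neighborSet z).ncard = 2 ∧ P₀.neighborSet z ⊆ S ∧
        M.neighborSet z = P₀.neighborSet z := by
      intro z hz
      obtain ⟨a, b, hab, haS, hbS, haadj, hbadj⟩ := cycle_two_neighbors W hW hz
      have hpair : ({a, b} : Set V) ⊆ P₀.neighborSet z := by
        rintro y (rfl | hy)
        · exact haadj
        · rw [Set.mem_singleton_iff] at hy; subst hy; exact hbadj
      have hsub : P₀.neighborSet z ⊆ M.neighborSet z := fun y hy => hP₀le hy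
      have h2a : 2 ≤ (P₀.neighborSet z).ncard := by
        calc 2 = ({a, b} : Set V).ncard := (Set.ncard_pair hab).symm
          _ ≤ _ := Set.ncard_le_ncard hpair (Set.toFinite _)
      have h2b : (P₀.neighborSet z).ncard ≤ (M.neighborSet z).ncard :=
        Set.ncard_le_ncard hsub (Set.toFinite _)
      have h2c := hdeg z
      have hcard : (P₀.neighborSet z).ncard = 2 := by omega
      have heqMP : M.neighborSet z = P₀.neighborSet z := by
        apply (Set.eq_of_subset_of_ncard_le hsub (by omega) (Set.toFinite _)).symm
      have heqpair : P₀.neighborSet z = {a, b} := by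
        apply (Set.eq_of_subset_of_ncard_le hpair (by rw [hcard, Set.ncard_pair hab])
          (Set.toFinite _)).symm
      refine ⟨hcard, ?_, heqMP⟩
      rw [heqpair]
      rintro y (rfl | hy)
      · exact haS
      · rw [Set.mem_singleton_iff] at hy; subst hy; exact hbS
    have hclosed : ∀ z ∈ S, M.neighborSet z ⊆ S := by
      intro z hz
      obtain ⟨_, h1, h2⟩ := hstep z hz
      rw [h2]
      exact h1
    have hvS : v ∈ S := W.start_mem_support
    set c := M.connectedComponentMk v with hc_def
    have hcsub : c.supp ⊆ S := supp_subset_of_closed hclosed hvS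
    have hcC : c ∈ C := by
      intro z hz
      have hzS : z ∈ S := hcsub hz
      obtain ⟨h1, _, h3⟩ := hstep z hzS
      rw [h3]
      exact h1
    have hvcS : vc c ∈ S := hcsub (hvc c)
    obtain ⟨h1, _, _⟩ := hstep (vc c) hvcS
    have := ncard_nbr_vc c hcC
    omega
  -- the small components do not increase
  have hsmall : P₀.numSmallComponents ≤ M.numSmallComponents := by
    set g : P₀.ConnectedComponent → M.ConnectedComponent :=
      fun c => M.connectedComponentMk (Quot.out c) with hg
    have hgout : ∀ c : P₀.ConnectedComponent, P₀.connectedComponentMk (Quot.out c) = c :=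
      fun c => Quot.out_eq c
    have hg_supp : ∀ c : P₀.ConnectedComponent, (g c).supp = c.supp := by
      intro c
      rw [hg]
      simp only
      rw [← supp_eq (Quot.out c), hgout c]
    apply Set.ncard_le_ncard_of_injOn g
    · intro c hcmem
      rw [Set.mem_setOf_eq] at hcmem ⊢
      rw [hg_supp c]
      exact hcmem
    · intro c _ c' _ heq
      apply ConnectedComponent.supp_injective
      rw [← hg_supp c, ← hg_supp c', heq]
  -- the edge count
  have hDsub : D ⊆ M.edgeSet := by
    rintro e ⟨c, hc, rfl⟩
    exact hadjc c hc
  have hDcard : D.ncard = C.ncard := by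
    rw [hD_def]
    apply Set.ncard_image_of_injOn
    intro c hc c' hc' heq
    rw [Sym2.eq_iff] at heq
    have : vc c = vc c' ∨ vc c = xc c' := by tauto
    have hcc : M.connectedComponentMk (vc c) = c' := by
      rcases this with h | h
      · rw [h]; exact comp_of_endpoint c' hc' (vc c') (Or.inl rfl)
      · rw [h]; exact comp_of_endpoint c' hc' (xc c') (Or.inr rfl)
    rw [← hcc, comp_of_endpoint c hc (vc c) (Or.inl rfl)]
  have hedges : P₀.edgeSet.ncard = M.edgeSet.ncard - M.numCycleComponents := by
    have h1 : P₀.edgeSet = M.edgeSet \ D := by rw [hP₀, edgeSet_deleteEdges]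
    rw [h1, Set.ncard_diff hDsub (Set.toFinite _), hDcard]
    rfl
  exact ⟨P₀, hP₀le, fun v => (Set.ncard_le_ncard (fun y hy => hP₀le hy)
    (Set.toFinite _)).trans (hdeg v), hacyclic, hsmall, hedges⟩

end FiniteAux

end Auxiliary

/-- There is a maximum 2-matching `M` of `G` whose number of components
with at most two vertices is at most the total number of 0-paths and 1-paths of every
path cover of `G`; consequently `G` has a path cover minimizing the total number of
0-paths and 1-paths, obtained from `M` by deleting one edge from each cycle component. -/
theorem stmt4 {V : Type*} [Fintype V] (G : SimpleGraph V) :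
    ∃ M : SimpleGraph V, G.IsMaxTwoMatching M ∧
      (∀ P : SimpleGraph V, G.IsPathCover P →
        M.numSmallComponents ≤ P.numZeroPaths + P.numOnePaths) ∧
      ∃ P : SimpleGraph V, G.IsPathCover P ∧
        (∀ P' : SimpleGraph V, G.IsPathCover P' →
          P.numZeroPaths + P.numOnePaths ≤ P'.numZeroPaths + P'.numOnePaths) ∧
        P ≤ M ∧ P.edgeSet.ncard = M.edgeSet.ncard - M.numCycleComponents := by
  classical
  have hbot : G.IsTwoMatching ⊥ := by
    refine ⟨bot_le, fun v => ?_⟩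
    have : (⊥ : SimpleGraph V).neighborSet v = ∅ := by ext; simp
    rw [this]
    simp
  obtain ⟨M₀, hM₀mem, hM₀max⟩ := Set.exists_max_image {N : SimpleGraph V | G.IsTwoMatching N}
    (fun N => N.edgeSet.ncard) (Set.toFinite _) ⟨⊥, hbot⟩
  have hM₀ : G.IsMaxTwoMatching M₀ := ⟨hM₀mem, fun M' h' => hM₀max M' h'⟩
  obtain ⟨M, hMmem, hMmin⟩ := Set.exists_min_image {N : SimpleGraph V | G.IsMaxTwoMatching N}
    (fun N => N.numSmallComponents) (Set.toFinite _) ⟨M₀, hM₀⟩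
  have part1 : ∀ P : SimpleGraph V, G.IsPathCover P →
      M.numSmallComponents ≤ P.numZeroPaths + P.numOnePaths := by
    intro P hP
    obtain ⟨MP, hMPmem, hMPmax⟩ := Set.exists_max_image
      {N : SimpleGraph V | G.IsMaxTwoMatching N}
      (fun N => (N.edgeSet ∩ P.edgeSet).ncard) (Set.toFinite _) ⟨M₀, hM₀⟩
    have h1 := part1core hMPmem hP (fun M' h' => hMPmax M' h')
    calc M.numSmallComponents ≤ MP.numSmallComponents := hMmin MP hMPmem
      _ ≤ P.numSmallComponents := h1
      _ = P.numZeroPaths + P.numOnePaths := (zero_add_one_eq_small P).symm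
  obtain ⟨P₀, hle, hdeg, hacyc, hsmall, hedges⟩ := part2 M hMmem.1.2
  have hP₀cover : G.IsPathCover P₀ := ⟨hle.trans hMmem.1.1, hdeg, hacyc⟩
  refine ⟨M, hMmem, part1, P₀, hP₀cover, ?_, hle, hedges⟩
  intro P' hP'
  calc P₀.numZeroPaths + P₀.numOnePaths = P₀.numSmallComponents := zero_add_one_eq_small P₀
    _ ≤ M.numSmallComponents := hsmall
    _ ≤ P'.numZeroPaths + P'.numOnePaths := part1 P' hP'
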